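/- Let R be a ring with a discrete valuation v, and assume R has characteristic p for a prime number p. Let x, y ∈ R be commuting elements with v(x) = v(y) = 0 and v(x − y) > 0. Then for every integer n ≥ 1 one has v(x^n − y^n) = p^{v_p(n)} · v(x − y), where v_p(n) denotes the p-adic valuation of n (so p^{v_p(n)} = |n|_p^{-1}). -/

import Mathlib

section Aux

variable {R : Type*} [Ring R] (v : R → WithTop ℤ)
  (hv0 : ∀ x : R, v x = ⊤ ↔ x = 0)
  (hvmul : ∀ x y : R, v (x * y) = v x + v y)
  (hvadd : ∀ x y : R, min (v x) (v y) ≤ v (x + y))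

include hv0 hvmul in
lemma aux_v_one [Nontrivial R] : v (1 : R) = 0 := by
  have h := hvmul 1 1
  rw [one_mul] at h
  have hne : v (1 : R) ≠ ⊤ := by simp [hv0]
  obtain ⟨a, ha⟩ := WithTop.ne_top_iff_exists.mp hne
  rw [← ha, ← WithTop.coe_add] at h
  have : a = a + a := WithTop.coe_injective h
  have : a = 0 := by omega
  rw [← ha, this]; rfl

include hv0 hvmul in
lemma aux_v_neg [Nontrivial R] (a : R) : v (-a) = v a := by
  have hmone : v (-1 : R) = 0 := by
    have h := hvmul (-1) (-1)
    rw [neg_mul_neg, one_mul, aux_v_one v hv0 hvmul] at h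
    have hne : v (-1 : R) ≠ ⊤ := by simp [hv0]
    obtain ⟨b, hb⟩ := WithTop.ne_top_iff_exists.mp hne
    rw [← hb, ← WithTop.coe_add] at h
    have : b + b = 0 := WithTop.coe_injective h.symm
    have : b = 0 := by omega
    rw [← hb, this]; rfl
  rw [show -a = (-1 : R) * a from (neg_one_mul a).symm, hvmul, hmone, zero_add]

include hvadd in
lemma aux_v_sum {ι : Type*} (hvz : v (0 : R) = ⊤) (s : Finset ι) (f : ι → R) (c : WithTop ℤ)
    (h : ∀ i ∈ s, c ≤ v (f i)) : c ≤ v (∑ i ∈ s, f i) := by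
  induction s using Finset.cons_induction with
  | empty => simp [hvz]
  | cons a s ha ih =>
    rw [Finset.sum_cons]
    refine le_trans (le_min (h a (Finset.mem_cons_self a s)) ?_) (hvadd _ _)
    exact ih fun i hi => h i (Finset.mem_cons_of_mem hi)

include hv0 hvmul in
lemma aux_v_pow [Nontrivial R] {a : R} (ha : v a = 0) (k : ℕ) : v (a ^ k) = 0 := by
  induction k with
  | zero => simpa using aux_v_one v hv0 hvmul
  | succ k ih => rw [pow_succ, hvmul, ih, ha, add_zero]

include hvmul in
lemma aux_v_pow_smul (a : R) (k : ℕ) (_hvz : v (0 : R) = ⊤) (h1 : v (1 : R) = 0) :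
    v (a ^ k) = k • v a := by
  induction k with
  | zero => simpa using h1
  | succ k ih => rw [pow_succ, hvmul, ih, succ_nsmul]

include hv0 hvmul hvadd in
lemma aux_v_add_eq_left [Nontrivial R] {a b : R} (h : v a < v b) : v (a + b) = v a := by
  refine le_antisymm ?_ ?_
  · have h2 := hvadd (a + b) (-b)
    rw [add_neg_cancel_right, aux_v_neg v hv0 hvmul] at h2
    rcases min_le_iff.mp h2 with h3 | h3
    · exact h3
    · exact absurd h3 (not_le.mpr h)
  · exact le_trans (le_min le_rfl h.le) (hvadd a b)

include hv0 hvmul hvadd in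
lemma aux_v_natCast_nonneg [Nontrivial R] (k : ℕ) : 0 ≤ v (k : R) := by
  induction k with
  | zero => simp [(hv0 (0 : R)).mpr rfl]
  | succ k ih =>
    push_cast
    refine le_trans (le_min ih ?_) (hvadd _ _)
    rw [aux_v_one v hv0 hvmul]

include hv0 hvmul hvadd in
lemma aux_v_natCast_coprime (p : ℕ) (hp : p.Prime) [CharP R p] {m : ℕ} (hm : ¬ p ∣ m) :
    v (m : R) = 0 := by
  haveI : Nontrivial R := CharP.nontrivial_of_char_ne_one hp.ne_one
  haveI : Fact p.Prime := ⟨hp⟩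
  have hne : (m : ZMod p) ≠ 0 := by
    rwa [Ne, ZMod.natCast_eq_zero_iff]
  set a : ZMod p := (m : ZMod p) with ha
  have hinv : a * a⁻¹ = 1 := mul_inv_cancel₀ hne
  set w : ℕ := (a⁻¹).val with hw
  let φ := ZMod.castHom (dvd_refl p) R
  have hmw : (m : R) * (w : R) = 1 := by
    have : (m : R) * (w : R) = φ (a * a⁻¹) := by
      rw [map_mul, map_natCast φ m, ← ZMod.natCast_rightInverse a⁻¹, map_natCast φ]
    rw [this, hinv, map_one]
  have h2 := hvmul (m : R) (w : R)
  rw [hmw, aux_v_one v hv0 hvmul] at h2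
  have hm0 : 0 ≤ v (m : R) := aux_v_natCast_nonneg v hv0 hvmul hvadd m
  have hw0 : 0 ≤ v (w : R) := aux_v_natCast_nonneg v hv0 hvmul hvadd w
  refine le_antisymm ?_ hm0
  calc v (m : R) = v (m : R) + 0 := (add_zero _).symm
    _ ≤ v (m : R) + v (w : R) := add_le_add_right hw0 _
    _ = 0 := h2.symm

include hv0 hvmul hvadd in
lemma aux_v_sub_pow_ge [Nontrivial R] {x y : R} (hcomm : x * y = y * x)
    (hvx : v x = 0) (hvy : v y = 0) (k : ℕ) : v (x - y) ≤ v (x ^ k - y ^ k) := by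
  rw [← Commute.mul_geom_sum₂ hcomm k, hvmul]
  refine le_add_of_nonneg_right ?_
  refine aux_v_sum v hvadd ((hv0 0).mpr rfl) _ _ _ fun i _ => ?_
  rw [hvmul, aux_v_pow v hv0 hvmul hvx, aux_v_pow v hv0 hvmul hvy, add_zero]

include hv0 hvmul hvadd in
lemma aux_key_coprime (p : ℕ) (hp : p.Prime) [CharP R p] {x y : R} (hcomm : x * y = y * x)
    (hvx : v x = 0) (hvy : v y = 0) (hxy : 0 < v (x - y)) {m : ℕ} (hm : ¬ p ∣ m) :
    v (x ^ m - y ^ m) = v (x - y) := by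
  haveI : Nontrivial R := CharP.nontrivial_of_char_ne_one hp.ne_one
  set S := ∑ i ∈ Finset.range m, x ^ i * y ^ (m - 1 - i) with hS
  have hfact : x ^ m - y ^ m = (x - y) * S := (Commute.mul_geom_sum₂ hcomm m).symm
  set T := ∑ i ∈ Finset.range m, x ^ i * (y ^ (m - 1 - i) - x ^ (m - 1 - i)) with hT
  have hSplit : S = (m : R) * x ^ (m - 1) + T := by
    have : T = S - (m : R) * x ^ (m - 1) := by
      rw [hT, hS]
      have : ∀ i ∈ Finset.range m,
          x ^ i * (y ^ (m - 1 - i) - x ^ (m - 1 - i))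
            = x ^ i * y ^ (m - 1 - i) - x ^ (m - 1) := by
        intro i hi
        rw [mul_sub, ← pow_add]
        congr 2
        have := Finset.mem_range.mp hi
        omega
      rw [Finset.sum_congr rfl this, Finset.sum_sub_distrib, Finset.sum_const,
        Finset.card_range, nsmul_eq_mul]
    rw [this, add_sub_cancel]
  have hvA : v ((m : R) * x ^ (m - 1)) = 0 := by
    rw [hvmul, aux_v_natCast_coprime v hv0 hvmul hvadd p hp hm,
      aux_v_pow v hv0 hvmul hvx, add_zero]
  have hvT : v (x - y) ≤ v T := by
    refine aux_v_sum v hvadd ((hv0 0).mpr rfl) _ _ _ fun i _ => ?_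
    rw [hvmul, aux_v_pow v hv0 hvmul hvx, zero_add]
    have hneg : y ^ (m - 1 - i) - x ^ (m - 1 - i) = -(x ^ (m - 1 - i) - y ^ (m - 1 - i)) :=
      (neg_sub _ _).symm
    rw [hneg, aux_v_neg v hv0 hvmul]
    exact aux_v_sub_pow_ge v hv0 hvmul hvadd hcomm hvx hvy _
  have hvS : v S = 0 := by
    rw [hSplit, aux_v_add_eq_left v hv0 hvmul hvadd (by rw [hvA]; exact lt_of_lt_of_le hxy hvT)]
    exact hvA
  rw [hfact, hvmul, hvS, add_zero]

end Aux

/-- In a ring of prime characteristic p with a discrete valuation: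
for commuting x, y with v(x) = v(y) = 0 and v(x − y) > 0, one has
v(xⁿ − yⁿ) = p^{v_p(n)} · v(x − y) for all n ≥ 1. -/
theorem valuation_powers_char_p {R : Type*} [Ring R]
    (p : ℕ) (hp : p.Prime) [CharP R p]
    (v : R → WithTop ℤ)
    (hv0 : ∀ x : R, v x = ⊤ ↔ x = 0)
    (hvmul : ∀ x y : R, v (x * y) = v x + v y)
    (hvadd : ∀ x y : R, min (v x) (v y) ≤ v (x + y))
    (x y : R) (hcomm : x * y = y * x)
    (hvx : v x = 0) (hvy : v y = 0) (hxy : 0 < v (x - y)) :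
    ∀ n : ℕ, 1 ≤ n → v (x ^ n - y ^ n) = (p ^ padicValNat p n) • v (x - y) := by
  intro n hn
  haveI : Nontrivial R := CharP.nontrivial_of_char_ne_one hp.ne_one
  haveI : Fact p.Prime := ⟨hp⟩
  have hn0 : n ≠ 0 := Nat.one_le_iff_ne_zero.mp hn
  set k := padicValNat p n with hk
  set m := n / p ^ k with hmdef
  have hfac : n.factorization p = k := Nat.factorization_def n hp
  have hmul : p ^ k * m = n := by
    have h := Nat.ordProj_mul_ordCompl_eq_self n p
    rwa [hfac] at h
  have hm : ¬ p ∣ m := by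
    have h := Nat.not_dvd_ordCompl hp hn0
    rwa [hfac] at h
  set X := x ^ p ^ k with hX
  set Y := y ^ p ^ k with hY
  have hXY : X - Y = (x - y) ^ p ^ k := (sub_pow_char_pow_of_commute p k hcomm).symm
  have hvone : v (1 : R) = 0 := aux_v_one v hv0 hvmul
  have hvz : v (0 : R) = ⊤ := (hv0 0).mpr rfl
  have hvXYeq : v (X - Y) = (p ^ k) • v (x - y) := by
    rw [hXY, aux_v_pow_smul v hvmul _ _ hvz hvone]
  have hXYpos : 0 < v (X - Y) := by
    rw [hvXYeq]
    obtain ⟨j, hj⟩ : ∃ j, p ^ k = j + 1 :=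
      ⟨p ^ k - 1, by have := Nat.one_le_pow k p hp.pos; omega⟩
    rw [hj, succ_nsmul]
    calc (0 : WithTop ℤ) < v (x - y) := hxy
      _ = 0 + v (x - y) := (zero_add _).symm
      _ ≤ j • v (x - y) + v (x - y) := add_le_add_left (nsmul_nonneg hxy.le j) _
  have hcommXY : X * Y = Y * X := Commute.pow_pow hcomm _ _
  have hvX : v X = 0 := aux_v_pow v hv0 hvmul hvx _
  have hvY : v Y = 0 := aux_v_pow v hv0 hvmul hvy _
  have hkey := aux_key_coprime v hv0 hvmul hvadd p hp hcommXY hvX hvY hXYpos hm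
  have hxn : x ^ n = X ^ m := by rw [hX, ← pow_mul, hmul]
  have hyn : y ^ n = Y ^ m := by rw [hY, ← pow_mul, hmul]
  rw [hxn, hyn, hkey, hvXYeq]
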